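/- Counting Lemma: for all graphons U and W and every finite simple graph F, |t(F,U) − t(F,W)| ≤ |E(F)| · δ_□(U,W). -/

import Mathlib

open MeasureTheory Set Filter

/-- The Lebesgue measure restricted to `[0,1]`. -/
noncomputable abbrev μ01 : MeasureTheory.Measure ℝ :=
  MeasureTheory.volume.restrict (Set.Icc (0:ℝ) 1)

/-- A graphon: a symmetric measurable function `[0,1]² → [0,1]`
(defined on all of `ℝ²` for convenience). -/
def IsGraphon (W : ℝ → ℝ → ℝ) : Prop :=
  Measurable (Function.uncurry W) ∧ (∀ x y, W x y = W y x) ∧ ∀ x y, W x y ∈ Set.Icc (0:ℝ) 1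

-- The homomorphism density `t(F,W)` of a finite simple graph `F` in a graphon `W`.
open scoped Classical in
noncomputable def homDensity {n : ℕ} (F : SimpleGraph (Fin n)) (W : ℝ → ℝ → ℝ) : ℝ :=
  ∫ x : Fin n → ℝ,
    (∏ p ∈ Finset.univ.filter (fun p : Fin n × Fin n => p.1 < p.2 ∧ F.Adj p.1 p.2),
      W (x p.1) (x p.2)) ∂(MeasureTheory.Measure.pi fun _ => μ01)

/-- The cut norm `‖U‖_□` of a kernel `U`. -/
noncomputable def cutNorm (U : ℝ → ℝ → ℝ) : ℝ :=
  sSup { r : ℝ | ∃ S T : Set ℝ, MeasurableSet S ∧ MeasurableSet T ∧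
    S ⊆ Set.Icc (0:ℝ) 1 ∧ T ⊆ Set.Icc (0:ℝ) 1 ∧
    r = |∫ x in S, ∫ y in T, U x y| }

/-- An invertible measure preserving map of `[0,1]` onto itself. -/
def IsInvMeasurePreserving (φ : ℝ → ℝ) : Prop :=
  Set.MapsTo φ (Set.Icc (0:ℝ) 1) (Set.Icc (0:ℝ) 1) ∧
  MeasureTheory.MeasurePreserving φ μ01 μ01 ∧
  ∃ ψ : ℝ → ℝ, Set.MapsTo ψ (Set.Icc (0:ℝ) 1) (Set.Icc (0:ℝ) 1) ∧
    MeasureTheory.MeasurePreserving ψ μ01 μ01 ∧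
    (∀ x ∈ Set.Icc (0:ℝ) 1, ψ (φ x) = x) ∧ (∀ x ∈ Set.Icc (0:ℝ) 1, φ (ψ x) = x)

/-- The cut distance `δ_□(U,W)` between two graphons. -/
noncomputable def cutDist (U W : ℝ → ℝ → ℝ) : ℝ :=
  sInf { r : ℝ | ∃ φ : ℝ → ℝ, IsInvMeasurePreserving φ ∧
    r = cutNorm (fun x y => U x y - W (φ x) (φ y)) }

-- Counting Lemma: `|t(F,U) − t(F,W)| ≤ |E(F)| · δ_□(U,W)`.

open scoped ENNReal Pointwise

instance : IsProbabilityMeasure μ01 := by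
  constructor
  rw [Measure.restrict_apply_univ, Real.volume_Icc]
  norm_num

lemma integrable_of_bdd {α : Type*} [MeasurableSpace α] {μ : Measure α} [IsFiniteMeasure μ]
    {f : α → ℝ} {C : ℝ} (hm : AEStronglyMeasurable f μ) (h : ∀ x, |f x| ≤ C) :
    Integrable f μ :=
  Integrable.mono' (integrable_const C) hm (Eventually.of_forall (by simpa [Real.norm_eq_abs] using h))


lemma volume_le_one {S : Set ℝ} (hS : S ⊆ Set.Icc (0:ℝ) 1) : volume S ≤ 1 := by
  refine le_trans (measure_mono hS) ?_
  rw [Real.volume_Icc]; norm_num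

lemma volume_lt_top {S : Set ℝ} (hS : S ⊆ Set.Icc (0:ℝ) 1) : volume S < ⊤ :=
  lt_of_le_of_lt (volume_le_one hS) (by norm_num)

lemma toReal_volume_le_one {S : Set ℝ} (hS : S ⊆ Set.Icc (0:ℝ) 1) : (volume S).toReal ≤ 1 := by
  have h := ENNReal.toReal_mono (by norm_num : (1:ℝ≥0∞) ≠ ⊤) (volume_le_one hS)
  simpa using h

lemma abs_setIntegral_setIntegral_le_one {D : ℝ → ℝ → ℝ} (hDb : ∀ x y, |D x y| ≤ 1)
    {S T : Set ℝ} (hS : MeasurableSet S) (hT : MeasurableSet T)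
    (hS1 : S ⊆ Set.Icc (0:ℝ) 1) (hT1 : T ⊆ Set.Icc (0:ℝ) 1) :
    |∫ x in S, ∫ y in T, D x y| ≤ 1 := by
  have inner : ∀ x, ‖∫ y in T, D x y‖ ≤ 1 := by
    intro x
    have h1 : ‖∫ y in T, D x y‖ ≤ 1 * (volume T).toReal :=
      norm_setIntegral_le_of_norm_le_const (volume_lt_top hT1)
        (fun y _ => by simpa [Real.norm_eq_abs] using hDb x y)
    refine h1.trans ?_
    simpa using toReal_volume_le_one hT1
  have h2 : ‖∫ x in S, ∫ y in T, D x y‖ ≤ 1 * (volume S).toReal :=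
    norm_setIntegral_le_of_norm_le_const (volume_lt_top hS1) (fun x _ => inner x)
  refine le_trans ?_ (h2.trans (by simpa using toReal_volume_le_one hS1))
  simp [Real.norm_eq_abs]

lemma cutNorm_bddAbove {D : ℝ → ℝ → ℝ} (hDb : ∀ x y, |D x y| ≤ 1) :
    BddAbove { r : ℝ | ∃ S T : Set ℝ, MeasurableSet S ∧ MeasurableSet T ∧
      S ⊆ Set.Icc (0:ℝ) 1 ∧ T ⊆ Set.Icc (0:ℝ) 1 ∧
      r = |∫ x in S, ∫ y in T, D x y| } := by
  refine ⟨1, fun r hr => ?_⟩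
  obtain ⟨S, T, hS, hT, hS1, hT1, rfl⟩ := hr
  exact abs_setIntegral_setIntegral_le_one hDb hS hT hS1 hT1

lemma le_cutNorm {D : ℝ → ℝ → ℝ} (hDb : ∀ x y, |D x y| ≤ 1)
    {S T : Set ℝ} (hS : MeasurableSet S) (hT : MeasurableSet T)
    (hS1 : S ⊆ Set.Icc (0:ℝ) 1) (hT1 : T ⊆ Set.Icc (0:ℝ) 1) :
    |∫ x in S, ∫ y in T, D x y| ≤ cutNorm D :=
  le_csSup (cutNorm_bddAbove hDb) ⟨S, T, hS, hT, hS1, hT1, rfl⟩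

lemma cutNorm_nonneg {D : ℝ → ℝ → ℝ} (hDb : ∀ x y, |D x y| ≤ 1) : 0 ≤ cutNorm D := by
  have h := le_cutNorm hDb MeasurableSet.empty MeasurableSet.empty
    (empty_subset _) (empty_subset _)
  simpa using h

lemma cutNorm_neg {D : ℝ → ℝ → ℝ} :
    cutNorm (fun x y => -(D x y)) = cutNorm D := by
  unfold cutNorm
  congr 1
  ext r
  constructor <;> rintro ⟨S, T, hS, hT, hS1, hT1, rfl⟩ <;>
    exact ⟨S, T, hS, hT, hS1, hT1, by simp [integral_neg]⟩

lemma pos_part_step {w g : ℝ → ℝ} (hw : StronglyMeasurable w) (hwb : ∀ t, |w t| ≤ 1)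
    (hg : Measurable g) (hg01 : ∀ x, g x ∈ Set.Icc (0:ℝ) 1) :
    ∫ t, w t * g t ∂μ01 ≤ ∫ t in ({t | 0 < w t} ∩ Set.Icc (0:ℝ) 1), w t := by
  have hS : MeasurableSet {t | 0 < w t} := measurableSet_lt measurable_const hw.measurable
  have hwint : Integrable w μ01 := integrable_of_bdd hw.aestronglyMeasurable hwb
  have step : ∫ t, w t * g t ∂μ01 ≤ ∫ t, ({t | 0 < w t}).indicator w t ∂μ01 := by
    refine integral_mono (integrable_of_bdd (C := 1) ((hw.measurable.mul hg).aestronglyMeasurable)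
      (fun t => ?_)) (hwint.indicator hS) (fun t => ?_)
    · rw [abs_mul]
      calc |w t| * |g t| ≤ 1 * 1 := by
            refine mul_le_mul (hwb t) ?_ (abs_nonneg _) zero_le_one
            rw [abs_of_nonneg (hg01 t).1]; exact (hg01 t).2
        _ = 1 := by ring
    · by_cases ht : 0 < w t
      · simp only [Set.indicator, mem_setOf_eq, ht, if_true]
        nlinarith [(hg01 t).1, (hg01 t).2]
      · simp only [Set.indicator, mem_setOf_eq, ht, if_false]
        push_neg at ht
        nlinarith [(hg01 t).1, (hg01 t).2]
  refine step.trans (le_of_eq ?_)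
  rw [integral_indicator hS, Measure.restrict_restrict hS]

lemma oneside {D : ℝ → ℝ → ℝ} {f g : ℝ → ℝ}
    (hD : Measurable (Function.uncurry D)) (hDb : ∀ x y, |D x y| ≤ 1)
    (hf : Measurable f) (hf01 : ∀ x, f x ∈ Set.Icc (0:ℝ) 1)
    (hg : Measurable g) (hg01 : ∀ x, g x ∈ Set.Icc (0:ℝ) 1) :
    ∫ s, ∫ t, D s t * (f s * g t) ∂μ01 ∂μ01 ≤ cutNorm D := by
  have hDm : Measurable fun p : ℝ × ℝ => D p.1 p.2 := hD
  set h := fun s => ∫ t, D s t * g t ∂μ01 with hh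
  have hmeas_h : StronglyMeasurable h :=
    StronglyMeasurable.integral_prod_right'
      (f := fun p : ℝ × ℝ => D p.1 p.2 * g p.2)
      ((hDm.mul (hg.comp measurable_snd)).stronglyMeasurable)
  have hbd_pt : ∀ s t, |D s t * g t| ≤ 1 := by
    intro s t
    rw [abs_mul]
    calc |D s t| * |g t| ≤ 1 * 1 := by
          refine mul_le_mul (hDb s t) ?_ (abs_nonneg _) zero_le_one
          rw [abs_of_nonneg (hg01 t).1]; exact (hg01 t).2
      _ = 1 := by ring
  have hb_h : ∀ s, |h s| ≤ 1 := by
    intro s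
    have hbd : ∀ᵐ t ∂μ01, ‖D s t * g t‖ ≤ 1 :=
      Eventually.of_forall fun t => by rw [Real.norm_eq_abs]; exact hbd_pt s t
    have h2 := norm_integral_le_of_norm_le_const (μ := μ01) hbd
    rw [hh]
    simpa [Real.norm_eq_abs] using h2
  have e1 : ∫ s, ∫ t, D s t * (f s * g t) ∂μ01 ∂μ01 = ∫ s, h s * f s ∂μ01 := by
    refine integral_congr_ae (Eventually.of_forall fun s => ?_)
    calc ∫ t, D s t * (f s * g t) ∂μ01 = ∫ t, f s * (D s t * g t) ∂μ01 := by
          refine integral_congr_ae (Eventually.of_forall fun t => ?_)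
          simp only; ring
      _ = f s * h s := integral_const_mul _ _
      _ = h s * f s := mul_comm _ _
  rw [e1]
  have step1 := pos_part_step hmeas_h hb_h hf hf01
  set S' := {s | 0 < h s} ∩ Set.Icc (0:ℝ) 1 with hS'def
  have hS' : MeasurableSet S' :=
    (measurableSet_lt measurable_const hmeas_h.measurable).inter measurableSet_Icc
  have hS'1 : S' ⊆ Set.Icc (0:ℝ) 1 := inter_subset_right
  haveI : IsFiniteMeasure (volume.restrict S') :=
    ⟨by rw [Measure.restrict_apply_univ]; exact volume_lt_top hS'1⟩
  have hint1 : Integrable (Function.uncurry fun s t => D s t * g t)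
      ((volume.restrict S').prod μ01) :=
    integrable_of_bdd (C := 1) ((hDm.mul (hg.comp measurable_snd)).aestronglyMeasurable)
      (fun p => hbd_pt p.1 p.2)
  have swap1 : ∫ s in S', h s = ∫ t, (∫ s in S', D s t) * g t ∂μ01 := by
    have hs := integral_integral_swap (f := fun s t => D s t * g t) hint1
    rw [show (∫ s in S', h s) = ∫ s in S', ∫ t, D s t * g t ∂μ01 from rfl, hs]
    refine integral_congr_ae (Eventually.of_forall fun t => ?_)
    exact integral_mul_const _ _
  set k := fun t => ∫ s in S', D s t with hk
  have hmeas_k : StronglyMeasurable k :=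
    StronglyMeasurable.integral_prod_right' (f := fun p : ℝ × ℝ => D p.2 p.1)
      ((hDm.comp measurable_swap).stronglyMeasurable)
  have hb_k : ∀ t, |k t| ≤ 1 := by
    intro t
    have h1 : ‖∫ s in S', D s t‖ ≤ 1 * (volume S').toReal :=
      norm_setIntegral_le_of_norm_le_const (volume_lt_top hS'1)
        (fun s _ => by simpa [Real.norm_eq_abs] using hDb s t)
    have := h1.trans (by simpa using toReal_volume_le_one hS'1)
    simpa [Real.norm_eq_abs] using this
  have step2 := pos_part_step hmeas_k hb_k hg hg01
  set T' := {t | 0 < k t} ∩ Set.Icc (0:ℝ) 1 with hT'def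
  have hT' : MeasurableSet T' :=
    (measurableSet_lt measurable_const hmeas_k.measurable).inter measurableSet_Icc
  have hT'1 : T' ⊆ Set.Icc (0:ℝ) 1 := inter_subset_right
  haveI : IsFiniteMeasure (volume.restrict T') :=
    ⟨by rw [Measure.restrict_apply_univ]; exact volume_lt_top hT'1⟩
  have hint2 : Integrable (Function.uncurry fun t s => D s t)
      ((volume.restrict T').prod (volume.restrict S')) :=
    integrable_of_bdd (C := 1) ((hDm.comp measurable_swap).aestronglyMeasurable)
      (fun p => hDb p.2 p.1)
  have swap2 : ∫ t in T', k t = ∫ s in S', ∫ t in T', D s t :=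
    integral_integral_swap (f := fun t s => D s t) hint2
  have final : ∫ s in S', ∫ t in T', D s t ≤ cutNorm D :=
    le_trans (le_abs_self _) (le_cutNorm hDb hS' hT' hS'1 hT'1)
  calc ∫ s, h s * f s ∂μ01 ≤ ∫ s in S', h s := step1
    _ = ∫ t, k t * g t ∂μ01 := swap1
    _ ≤ ∫ t in T', k t := step2
    _ = ∫ s in S', ∫ t in T', D s t := swap2
    _ ≤ cutNorm D := final

lemma abs_double_le_cutNorm {D : ℝ → ℝ → ℝ} {f g : ℝ → ℝ}
    (hD : Measurable (Function.uncurry D)) (hDb : ∀ x y, |D x y| ≤ 1)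
    (hf : Measurable f) (hf01 : ∀ x, f x ∈ Set.Icc (0:ℝ) 1)
    (hg : Measurable g) (hg01 : ∀ x, g x ∈ Set.Icc (0:ℝ) 1) :
    |∫ s, ∫ t, D s t * (f s * g t) ∂μ01 ∂μ01| ≤ cutNorm D := by
  rw [abs_le]
  refine ⟨?_, oneside hD hDb hf hf01 hg hg01⟩
  have hD' : Measurable (Function.uncurry fun x y => -(D x y)) := hD.neg
  have hDb' : ∀ x y, |(fun x y => -(D x y)) x y| ≤ 1 := fun x y => by
    simpa [abs_neg] using hDb x y
  have h1 := oneside hD' hDb' hf hf01 hg hg01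
  rw [cutNorm_neg] at h1
  have e : ∫ s, ∫ t, -(D s t) * (f s * g t) ∂μ01 ∂μ01
      = -∫ s, ∫ t, D s t * (f s * g t) ∂μ01 ∂μ01 := by
    rw [← integral_neg]
    refine integral_congr_ae (Eventually.of_forall fun s => ?_)
    show ∫ t, -(D s t) * (f s * g t) ∂μ01 = -∫ t, D s t * (f s * g t) ∂μ01
    rw [← integral_neg]
    refine integral_congr_ae (Eventually.of_forall fun t => ?_)
    simp only; ring
  rw [e] at h1
  linarith

lemma map_update_pi {n : ℕ} (a : Fin n) :
    Measure.map (fun p : (Fin n → ℝ) × ℝ => Function.update p.1 a p.2)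
      ((Measure.pi fun _ : Fin n => μ01).prod μ01) = Measure.pi fun _ : Fin n => μ01 := by
  refine (Measure.pi_eq fun s hs => ?_).symm
  rw [Measure.map_apply measurable_update' (MeasurableSet.univ_pi hs)]
  have hpre : (fun p : (Fin n → ℝ) × ℝ => Function.update p.1 a p.2) ⁻¹' (Set.pi Set.univ s)
      = (Set.pi Set.univ (Function.update s a Set.univ)) ×ˢ (s a) := by
    ext p
    simp only [Set.mem_preimage, Set.mem_pi, Set.mem_univ, forall_true_left, Set.mem_prod]
    constructor
    · intro hp
      refine ⟨fun i => ?_, by simpa [Function.update_self] using hp a⟩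
      by_cases hia : i = a
      · subst hia; simp [Function.update_self]
      · have h2 := hp i
        rw [Function.update_of_ne hia] at h2
        rw [Function.update_of_ne hia]
        exact h2
    · rintro ⟨h1, h2⟩ i
      by_cases hia : i = a
      · subst hia; rw [Function.update_self]; exact h2
      · rw [Function.update_of_ne hia]
        have h3 := h1 i
        rw [Function.update_of_ne hia] at h3
        exact h3
  rw [hpre, Measure.prod_prod, Measure.pi_pi]
  have e : ∀ i, μ01 (Function.update s a Set.univ i)
      = Function.update (fun i => μ01 (s i)) a 1 i := by
    intro i; by_cases hia : i = a
    · subst hia; simp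
    · rw [Function.update_of_ne hia, Function.update_of_ne hia]
  rw [Finset.prod_congr rfl (fun i _ => e i), Finset.prod_update_of_mem (Finset.mem_univ a),
    one_mul, ← Finset.mul_prod_erase Finset.univ _ (Finset.mem_univ a)]
  rw [Finset.sdiff_singleton_eq_erase]
  exact mul_comm _ _

lemma integral_eq_integral_update {n : ℕ} (a : Fin n) {F : (Fin n → ℝ) → ℝ}
    (hF : Measurable F) (hFb : ∀ x, |F x| ≤ 1) :
    ∫ x, F x ∂(Measure.pi fun _ : Fin n => μ01)
      = ∫ x, ∫ s, F (Function.update x a s) ∂μ01 ∂(Measure.pi fun _ : Fin n => μ01) := by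
  have hT : Measurable (fun p : (Fin n → ℝ) × ℝ => Function.update p.1 a p.2) :=
    measurable_update'
  conv_lhs => rw [← map_update_pi a]
  rw [integral_map hT.aemeasurable]
  · exact integral_prod _ (integrable_of_bdd (C := 1) ((hF.comp hT).aestronglyMeasurable)
      (fun p => hFb _))
  · rw [map_update_pi a]; exact hF.aestronglyMeasurable

lemma integral_eq_integral_update2 {n : ℕ} (a b : Fin n) {F : (Fin n → ℝ) → ℝ}
    (hF : Measurable F) (hFb : ∀ x, |F x| ≤ 1) :
    ∫ x, F x ∂(Measure.pi fun _ : Fin n => μ01)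
      = ∫ x, ∫ s, ∫ t, F (Function.update (Function.update x a s) b t) ∂μ01 ∂μ01
          ∂(Measure.pi fun _ : Fin n => μ01) := by
  have hT : Measurable (fun p : (Fin n → ℝ) × ℝ => Function.update p.1 b p.2) :=
    measurable_update'
  set H := fun x => ∫ t, F (Function.update x b t) ∂μ01 with hH
  have hmeas_H : StronglyMeasurable H :=
    StronglyMeasurable.integral_prod_right'
      (f := fun p : (Fin n → ℝ) × ℝ => F (Function.update p.1 b p.2))
      ((hF.comp hT).stronglyMeasurable)
  have hb_H : ∀ x, |H x| ≤ 1 := by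
    intro x
    have hbd : ∀ᵐ t ∂μ01, ‖F (Function.update x b t)‖ ≤ 1 :=
      Eventually.of_forall fun t => by rw [Real.norm_eq_abs]; exact hFb _
    have h2 := norm_integral_le_of_norm_le_const (μ := μ01) hbd
    rw [hH]; simpa [Real.norm_eq_abs] using h2
  rw [integral_eq_integral_update b hF hFb,
    show (∫ x, ∫ t, F (Function.update x b t) ∂μ01 ∂(Measure.pi fun _ : Fin n => μ01))
      = ∫ x, H x ∂(Measure.pi fun _ : Fin n => μ01) from rfl,
    integral_eq_integral_update a hmeas_H.measurable hb_H]

lemma meas_pair {α : Type*} [MeasurableSpace α] {D : ℝ → ℝ → ℝ}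
    (hD : Measurable (Function.uncurry D)) {u v : α → ℝ}
    (hu : Measurable u) (hv : Measurable v) :
    Measurable fun x => D (u x) (v x) :=
  hD.comp (hu.prodMk hv)

lemma edge_bound {n : ℕ} {a b : Fin n} (hab : a < b) {D : ℝ → ℝ → ℝ}
    (hD : Measurable (Function.uncurry D)) (hDb : ∀ x y, |D x y| ≤ 1)
    {S : Finset (Fin n × Fin n)} (hS : ∀ p ∈ S, p.1 < p.2) (habS : (a, b) ∉ S)
    {G : Fin n × Fin n → ℝ → ℝ → ℝ} (hG : ∀ p, Measurable (Function.uncurry (G p)))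
    (hG01 : ∀ p x y, G p x y ∈ Set.Icc (0:ℝ) 1) :
    |∫ x, D (x a) (x b) * ∏ p ∈ S, G p (x p.1) (x p.2)
        ∂(Measure.pi fun _ : Fin n => μ01)| ≤ cutNorm D := by
  classical
  have hab' : a ≠ b := hab.ne
  set F := fun x : Fin n → ℝ => D (x a) (x b) * ∏ p ∈ S, G p (x p.1) (x p.2) with hF
  have hprod01 : ∀ (T : Finset (Fin n × Fin n)) (y : Fin n → ℝ),
      (∏ p ∈ T, G p (y p.1) (y p.2)) ∈ Set.Icc (0:ℝ) 1 := by
    intro T y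
    constructor
    · exact Finset.prod_nonneg fun p _ => (hG01 p _ _).1
    · exact Finset.prod_le_one (fun p _ => (hG01 p _ _).1) (fun p _ => (hG01 p _ _).2)
  have hFmeas : Measurable F := by
    apply Measurable.mul
    · exact meas_pair hD (measurable_pi_apply a) (measurable_pi_apply b)
    · exact Finset.measurable_prod _ fun p _ =>
        meas_pair (hG p) (measurable_pi_apply p.1) (measurable_pi_apply p.2)
  have hFb : ∀ x, |F x| ≤ 1 := by
    intro x
    rw [hF]
    simp only
    rw [abs_mul]
    calc |D (x a) (x b)| * |∏ p ∈ S, G p (x p.1) (x p.2)| ≤ 1 * 1 := by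
          refine mul_le_mul (hDb _ _) ?_ (abs_nonneg _) zero_le_one
          rw [abs_of_nonneg (hprod01 S x).1]; exact (hprod01 S x).2
      _ = 1 := by ring
  rw [show (∫ x, D (x a) (x b) * ∏ p ∈ S, G p (x p.1) (x p.2)
        ∂(Measure.pi fun _ : Fin n => μ01)) = ∫ x, F x ∂(Measure.pi fun _ : Fin n => μ01)
      from rfl,
    integral_eq_integral_update2 a b hFmeas hFb]
  have key : ∀ x : Fin n → ℝ,
      |∫ s, ∫ t, F (Function.update (Function.update x a s) b t) ∂μ01 ∂μ01| ≤ cutNorm D := by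
    intro x
    set f := fun s : ℝ => ∏ p ∈ S.filter (fun p => ¬(p.1 = b ∨ p.2 = b)),
      G p (Function.update x a s p.1) (Function.update x a s p.2) with hfdef
    set g := fun t : ℝ => ∏ p ∈ S.filter (fun p => (p.1 = b ∨ p.2 = b)),
      G p (Function.update x b t p.1) (Function.update x b t p.2) with hgdef
    have hmf : Measurable f :=
      Finset.measurable_prod _ fun p _ => meas_pair (hG p)
        ((measurable_pi_apply p.1).comp (measurable_update x))
        ((measurable_pi_apply p.2).comp (measurable_update x))
    have hmg : Measurable g :=
      Finset.measurable_prod _ fun p _ => meas_pair (hG p)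
        ((measurable_pi_apply p.1).comp (measurable_update x))
        ((measurable_pi_apply p.2).comp (measurable_update x))
    have hf01 : ∀ s, f s ∈ Set.Icc (0:ℝ) 1 := fun s => hprod01 _ _
    have hg01 : ∀ t, g t ∈ Set.Icc (0:ℝ) 1 := fun t => hprod01 _ _
    have hpt : ∀ s t, F (Function.update (Function.update x a s) b t)
        = D s t * (f s * g t) := by
      intro s t
      set y := Function.update (Function.update x a s) b t with hy
      have hya : y a = s := by
        rw [hy, Function.update_of_ne hab', Function.update_self]
      have hyb : y b = t := by rw [hy, Function.update_self]
      have hsplit : (∏ p ∈ S, G p (y p.1) (y p.2)) = g t * f s := by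
        rw [← Finset.prod_filter_mul_prod_filter_not S (fun p => p.1 = b ∨ p.2 = b)]
        congr 1
        · refine Finset.prod_congr rfl fun p hp => ?_
          rw [Finset.mem_filter] at hp
          obtain ⟨hpS, hpb⟩ := hp
          have hlt := hS p hpS
          have hp1a : p.1 ≠ a := by
            intro h1
            rcases hpb with h2 | h2
            · exact hab' (h1 ▸ h2)
            · apply habS
              have hpe : p = (a, b) := Prod.ext h1 h2
              rwa [hpe] at hpS
          have hp2a : p.2 ≠ a := by
            intro h1
            rcases hpb with h2 | h2
            · rw [h2, h1] at hlt; exact absurd hlt (lt_asymm hab)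
            · exact hab' (h1 ▸ h2)
          have e1 : y p.1 = Function.update x b t p.1 := by
            by_cases hib : p.1 = b
            · rw [hib, hyb, Function.update_self]
            · rw [hy, Function.update_of_ne hib, Function.update_of_ne hp1a,
                Function.update_of_ne hib]
          have e2 : y p.2 = Function.update x b t p.2 := by
            by_cases hib : p.2 = b
            · rw [hib, hyb, Function.update_self]
            · rw [hy, Function.update_of_ne hib, Function.update_of_ne hp2a,
                Function.update_of_ne hib]
          rw [e1, e2]
        · refine Finset.prod_congr rfl fun p hp => ?_
          rw [Finset.mem_filter] at hp
          obtain ⟨hpS, hpb⟩ := hp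
          push_neg at hpb
          rw [show y p.1 = Function.update x a s p.1 from by
              rw [hy, Function.update_of_ne hpb.1],
            show y p.2 = Function.update x a s p.2 from by
              rw [hy, Function.update_of_ne hpb.2]]
      rw [hF]
      simp only
      rw [hya, hyb, hsplit]
      ring
    have : (∫ s, ∫ t, F (Function.update (Function.update x a s) b t) ∂μ01 ∂μ01)
        = ∫ s, ∫ t, D s t * (f s * g t) ∂μ01 ∂μ01 := by
      refine integral_congr_ae (Eventually.of_forall fun s => ?_)
      refine integral_congr_ae (Eventually.of_forall fun t => ?_)
      exact hpt s t
    rw [this]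
    exact abs_double_le_cutNorm hD hDb hmf hf01 hmg hg01
  have hfin := norm_integral_le_of_norm_le_const (μ := Measure.pi fun _ : Fin n => μ01)
    (C := cutNorm D) (Eventually.of_forall fun x => by rw [Real.norm_eq_abs]; exact key x)
  simpa [Real.norm_eq_abs] using hfin

lemma prod01 {n : ℕ} {H : Fin n × Fin n → ℝ → ℝ → ℝ}
    (h01 : ∀ p x y, H p x y ∈ Set.Icc (0:ℝ) 1) (T : Finset (Fin n × Fin n)) (x : Fin n → ℝ) :
    (∏ p ∈ T, H p (x p.1) (x p.2)) ∈ Set.Icc (0:ℝ) 1 :=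
  ⟨Finset.prod_nonneg fun p _ => (h01 p _ _).1,
   Finset.prod_le_one (fun p _ => (h01 p _ _).1) (fun p _ => (h01 p _ _).2)⟩

lemma abs_le_one_of_Icc {r : ℝ} (h : r ∈ Set.Icc (0:ℝ) 1) : |r| ≤ 1 := by
  rw [abs_of_nonneg h.1]; exact h.2

lemma mul_mem_Icc01 {r s : ℝ} (hr : r ∈ Set.Icc (0:ℝ) 1) (hs : s ∈ Set.Icc (0:ℝ) 1) :
    r * s ∈ Set.Icc (0:ℝ) 1 :=
  ⟨mul_nonneg hr.1 hs.1, mul_le_one₀ hr.2 hs.1 hs.2⟩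

lemma telescope {n : ℕ} {U V : ℝ → ℝ → ℝ}
    (hU : Measurable (Function.uncurry U)) (hU01 : ∀ x y, U x y ∈ Set.Icc (0:ℝ) 1)
    (hV : Measurable (Function.uncurry V)) (hV01 : ∀ x y, V x y ∈ Set.Icc (0:ℝ) 1)
    (E : Finset (Fin n × Fin n)) :
    ∀ (E₀ : Finset (Fin n × Fin n)) (G : Fin n × Fin n → ℝ → ℝ → ℝ),
      (∀ p ∈ E, p.1 < p.2) → (∀ p ∈ E₀, p.1 < p.2) → Disjoint E E₀ →
      (∀ p, Measurable (Function.uncurry (G p))) → (∀ p x y, G p x y ∈ Set.Icc (0:ℝ) 1) →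
      |(∫ x, (∏ p ∈ E, U (x p.1) (x p.2)) * ∏ p ∈ E₀, G p (x p.1) (x p.2)
          ∂(Measure.pi fun _ : Fin n => μ01))
        - ∫ x, (∏ p ∈ E, V (x p.1) (x p.2)) * ∏ p ∈ E₀, G p (x p.1) (x p.2)
          ∂(Measure.pi fun _ : Fin n => μ01)|
        ≤ E.card * cutNorm (fun x y => U x y - V x y) := by
  classical
  induction E using Finset.induction_on with
  | empty => intro E₀ G _ _ _ _ _; simp
  | @insert e E' he ih =>
    intro E₀ G hE hE0 hdisj hG hG01
    have hD : Measurable (Function.uncurry fun x y => U x y - V x y) := hU.sub hV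
    have hDb : ∀ x y, |U x y - V x y| ≤ 1 := by
      intro x y
      rw [abs_sub_le_iff]
      constructor <;> nlinarith [(hU01 x y).1, (hU01 x y).2, (hV01 x y).1, (hV01 x y).2]
    have hdisj' : Disjoint E' E₀ := (Finset.disjoint_insert_left.mp hdisj).2
    have heE0 : e ∉ E₀ := (Finset.disjoint_insert_left.mp hdisj).1
    have hE' : ∀ p ∈ E', p.1 < p.2 := fun p hp => hE p (Finset.mem_insert_of_mem hp)
    have hee : e.1 < e.2 := hE e (Finset.mem_insert_self e E')
    set π := (Measure.pi fun _ : Fin n => μ01)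
    -- the three hybrid integrands
    set f1 := fun x : Fin n → ℝ => U (x e.1) (x e.2) *
      ((∏ p ∈ E', U (x p.1) (x p.2)) * ∏ p ∈ E₀, G p (x p.1) (x p.2)) with hf1
    set f2 := fun x : Fin n → ℝ => V (x e.1) (x e.2) *
      ((∏ p ∈ E', U (x p.1) (x p.2)) * ∏ p ∈ E₀, G p (x p.1) (x p.2)) with hf2
    set f3 := fun x : Fin n → ℝ => V (x e.1) (x e.2) *
      ((∏ p ∈ E', V (x p.1) (x p.2)) * ∏ p ∈ E₀, G p (x p.1) (x p.2)) with hf3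
    have hm1 : Measurable f1 := (meas_pair hU (measurable_pi_apply e.1) (measurable_pi_apply e.2)).mul
      ((Finset.measurable_prod _ fun p _ =>
        meas_pair hU (measurable_pi_apply p.1) (measurable_pi_apply p.2)).mul
       (Finset.measurable_prod _ fun p _ =>
        meas_pair (hG p) (measurable_pi_apply p.1) (measurable_pi_apply p.2)))
    have hm2 : Measurable f2 := (meas_pair hV (measurable_pi_apply e.1) (measurable_pi_apply e.2)).mul
      ((Finset.measurable_prod _ fun p _ =>
        meas_pair hU (measurable_pi_apply p.1) (measurable_pi_apply p.2)).mul
       (Finset.measurable_prod _ fun p _ =>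
        meas_pair (hG p) (measurable_pi_apply p.1) (measurable_pi_apply p.2)))
    have hm3 : Measurable f3 := (meas_pair hV (measurable_pi_apply e.1) (measurable_pi_apply e.2)).mul
      ((Finset.measurable_prod _ fun p _ =>
        meas_pair hV (measurable_pi_apply p.1) (measurable_pi_apply p.2)).mul
       (Finset.measurable_prod _ fun p _ =>
        meas_pair (hG p) (measurable_pi_apply p.1) (measurable_pi_apply p.2)))
    have hb1 : ∀ x, f1 x ∈ Set.Icc (0:ℝ) 1 := fun x =>
      mul_mem_Icc01 (hU01 _ _) (mul_mem_Icc01 (prod01 (fun _ => hU01) E' x) (prod01 hG01 E₀ x))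
    have hb2 : ∀ x, f2 x ∈ Set.Icc (0:ℝ) 1 := fun x =>
      mul_mem_Icc01 (hV01 _ _) (mul_mem_Icc01 (prod01 (fun _ => hU01) E' x) (prod01 hG01 E₀ x))
    have hb3 : ∀ x, f3 x ∈ Set.Icc (0:ℝ) 1 := fun x =>
      mul_mem_Icc01 (hV01 _ _) (mul_mem_Icc01 (prod01 (fun _ => hV01) E' x) (prod01 hG01 E₀ x))
    have hi1 : Integrable f1 π := integrable_of_bdd (C := 1) hm1.aestronglyMeasurable
      (fun x => abs_le_one_of_Icc (hb1 x))
    have hi2 : Integrable f2 π := integrable_of_bdd (C := 1) hm2.aestronglyMeasurable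
      (fun x => abs_le_one_of_Icc (hb2 x))
    -- rewrite goal integrals
    have eq1 : (∫ x, (∏ p ∈ insert e E', U (x p.1) (x p.2)) *
        ∏ p ∈ E₀, G p (x p.1) (x p.2) ∂π) = ∫ x, f1 x ∂π := by
      refine integral_congr_ae (Eventually.of_forall fun x => ?_)
      rw [hf1]; simp only; rw [Finset.prod_insert he, mul_assoc]
    have eq3 : (∫ x, (∏ p ∈ insert e E', V (x p.1) (x p.2)) *
        ∏ p ∈ E₀, G p (x p.1) (x p.2) ∂π) = ∫ x, f3 x ∂π := by
      refine integral_congr_ae (Eventually.of_forall fun x => ?_)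
      rw [hf3]; simp only; rw [Finset.prod_insert he, mul_assoc]
    rw [eq1, eq3]
    -- first bracket
    have first : |(∫ x, f1 x ∂π) - ∫ x, f2 x ∂π| ≤ cutNorm (fun x y => U x y - V x y) := by
      have hsub : (∫ x, f1 x ∂π) - ∫ x, f2 x ∂π
          = ∫ x, (fun x y => U x y - V x y) (x e.1) (x e.2) *
              ∏ p ∈ E' ∪ E₀, (fun p => if p ∈ E' then U else G p) p (x p.1) (x p.2) ∂π := by
        rw [← integral_sub hi1 hi2]
        refine integral_congr_ae (Eventually.of_forall fun x => ?_)
        rw [hf1, hf2]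
        simp only
        have c1 : (∏ p ∈ E', (if p ∈ E' then U else G p) (x p.1) (x p.2))
            = ∏ p ∈ E', U (x p.1) (x p.2) :=
          Finset.prod_congr rfl fun p hp => by rw [if_pos hp]
        have c2 : (∏ p ∈ E₀, (if p ∈ E' then U else G p) (x p.1) (x p.2))
            = ∏ p ∈ E₀, G p (x p.1) (x p.2) :=
          Finset.prod_congr rfl fun p hp => by
            rw [if_neg (Finset.disjoint_right.mp hdisj' hp)]
        rw [Finset.prod_union hdisj', c1, c2]
        ring
      rw [hsub]
      refine edge_bound hee hD hDb ?_ ?_ ?_ ?_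
      · intro p hp
        rcases Finset.mem_union.mp hp with h | h
        · exact hE' p h
        · exact hE0 p h
      · rw [Prod.mk.eta]
        intro hmem
        rcases Finset.mem_union.mp hmem with h | h
        · exact he h
        · exact heE0 h
      · intro p
        by_cases hp : p ∈ E'
        · simpa [hp] using hU
        · simpa [hp] using hG p
      · intro p x y
        by_cases hp : p ∈ E'
        · simpa [hp] using hU01 x y
        · simpa [hp] using hG01 p x y
    -- second bracket via ih
    have second : |(∫ x, f2 x ∂π) - ∫ x, f3 x ∂π|
        ≤ E'.card * cutNorm (fun x y => U x y - V x y) := by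
      have hE0' : ∀ p ∈ insert e E₀, p.1 < p.2 := by
        intro p hp
        rcases Finset.mem_insert.mp hp with rfl | hp'
        · exact hee
        · exact hE0 p hp'
      have hdisj'' : Disjoint E' (insert e E₀) :=
        Finset.disjoint_insert_right.mpr ⟨he, hdisj'⟩
      have hG'' : ∀ p, Measurable (Function.uncurry
          ((fun p => if p = e then V else G p) p)) := by
        intro p
        by_cases hp : p = e
        · simpa [hp] using hV
        · simpa [hp] using hG p
      have hG''01 : ∀ p x y, (fun p => if p = e then V else G p) p x y ∈ Set.Icc (0:ℝ) 1 := by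
        intro p x y
        by_cases hp : p = e
        · simpa [hp] using hV01 x y
        · simpa [hp] using hG01 p x y
      have h := ih (insert e E₀) (fun p => if p = e then V else G p)
        hE' hE0' hdisj'' hG'' hG''01
      have eqQ : ∀ (x : Fin n → ℝ),
          (∏ p ∈ insert e E₀, (if p = e then V else G p) (x p.1) (x p.2))
            = V (x e.1) (x e.2) * ∏ p ∈ E₀, G p (x p.1) (x p.2) := by
        intro x
        rw [Finset.prod_insert heE0, if_pos rfl]
        congr 1
        refine Finset.prod_congr rfl fun p hp => ?_
        rw [if_neg (by rintro rfl; exact heE0 hp)]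
      have eqA : (∫ x, (∏ p ∈ E', U (x p.1) (x p.2)) *
          ∏ p ∈ insert e E₀, (if p = e then V else G p) (x p.1) (x p.2) ∂π)
            = ∫ x, f2 x ∂π := by
        refine integral_congr_ae (Eventually.of_forall fun x => ?_)
        simp only
        rw [eqQ x, hf2]; simp only; ring
      have eqB : (∫ x, (∏ p ∈ E', V (x p.1) (x p.2)) *
          ∏ p ∈ insert e E₀, (if p = e then V else G p) (x p.1) (x p.2) ∂π)
            = ∫ x, f3 x ∂π := by
        refine integral_congr_ae (Eventually.of_forall fun x => ?_)
        simp only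
        rw [eqQ x, hf3]; simp only; ring
      rw [eqA, eqB] at h
      exact h
    have tri : |(∫ x, f1 x ∂π) - ∫ x, f3 x ∂π|
        ≤ |(∫ x, f1 x ∂π) - ∫ x, f2 x ∂π| + |(∫ x, f2 x ∂π) - ∫ x, f3 x ∂π| :=
      abs_sub_le _ _ _
    have hcard : ((insert e E').card : ℝ) = E'.card + 1 := by
      rw [Finset.card_insert_of_notMem he]; push_cast; ring
    rw [hcard]
    calc |(∫ x, f1 x ∂π) - ∫ x, f3 x ∂π|
        ≤ |(∫ x, f1 x ∂π) - ∫ x, f2 x ∂π| + |(∫ x, f2 x ∂π) - ∫ x, f3 x ∂π| := tri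
      _ ≤ cutNorm (fun x y => U x y - V x y)
          + E'.card * cutNorm (fun x y => U x y - V x y) := add_le_add first second
      _ = (E'.card + 1) * cutNorm (fun x y => U x y - V x y) := by ring

open scoped Classical in
lemma homDensity_comp {n : ℕ} (F : SimpleGraph (Fin n)) {W : ℝ → ℝ → ℝ}
    (hW : Measurable (Function.uncurry W)) {φ : ℝ → ℝ}
    (hφ : MeasurePreserving φ μ01 μ01) :
    homDensity F (fun x y => W (φ x) (φ y)) = homDensity F W := by
  unfold homDensity
  have hΦ : MeasurePreserving (fun x : Fin n → ℝ => fun i => φ (x i))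
      (Measure.pi fun _ : Fin n => μ01) (Measure.pi fun _ : Fin n => μ01) :=
    measurePreserving_pi _ _ (fun _ => hφ)
  conv_rhs => rw [← hΦ.map_eq]
  have hgm : AEStronglyMeasurable
      (fun x : Fin n → ℝ => ∏ p ∈ Finset.univ.filter
        (fun p : Fin n × Fin n => p.1 < p.2 ∧ F.Adj p.1 p.2), W (x p.1) (x p.2))
      (Measure.map (fun x : Fin n → ℝ => fun i => φ (x i))
        (Measure.pi fun _ : Fin n => μ01)) := by
    rw [hΦ.map_eq]
    exact (Finset.measurable_prod _ fun p _ =>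
      meas_pair hW (measurable_pi_apply p.1) (measurable_pi_apply p.2)).aestronglyMeasurable
  rw [integral_map hΦ.measurable.aemeasurable hgm]


open scoped Classical in
theorem counting_lemma (U W : ℝ → ℝ → ℝ) (hU : IsGraphon U) (hW : IsGraphon W)
    {n : ℕ} (F : SimpleGraph (Fin n)) :
    |homDensity F U - homDensity F W| ≤
      ((Finset.univ.filter (fun p : Fin n × Fin n => p.1 < p.2 ∧ F.Adj p.1 p.2)).card : ℝ) *
        cutDist U W := by
  obtain ⟨hUm, hUsym, hU01⟩ := hU
  obtain ⟨hWm, hWsym, hW01⟩ := hW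
  set E := Finset.univ.filter (fun p : Fin n × Fin n => p.1 < p.2 ∧ F.Adj p.1 p.2) with hE
  set A := { r : ℝ | ∃ φ : ℝ → ℝ, IsInvMeasurePreserving φ ∧
    r = cutNorm (fun x y => U x y - W (φ x) (φ y)) } with hA
  have hAne : A.Nonempty :=
    ⟨cutNorm (fun x y => U x y - W (id x) (id y)), id,
      ⟨mapsTo_id _, MeasurePreserving.id _, id, mapsTo_id _, MeasurePreserving.id _,
        fun x _ => rfl, fun x _ => rfl⟩, rfl⟩
  have key : ∀ r ∈ A, |homDensity F U - homDensity F W| ≤ (E.card : ℝ) * r := by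
    rintro r ⟨φ, hφ, rfl⟩
    obtain ⟨hmapsto, hmp, _⟩ := hφ
    have hVm : Measurable (Function.uncurry fun x y => W (φ x) (φ y)) :=
      hWm.comp ((hmp.measurable.comp measurable_fst).prodMk
        (hmp.measurable.comp measurable_snd))
    have hV01 : ∀ x y, (fun x y => W (φ x) (φ y)) x y ∈ Set.Icc (0:ℝ) 1 :=
      fun x y => hW01 _ _
    have hinv : homDensity F (fun x y => W (φ x) (φ y)) = homDensity F W :=
      homDensity_comp F hWm hmp
    rw [← hinv]
    have hEfst : ∀ p ∈ E, p.1 < p.2 := fun p hp => (Finset.mem_filter.mp hp).2.1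
    have h := telescope hUm hU01 hVm hV01 E ∅ (fun _ => fun _ _ => 0) hEfst
      (by simp) (Finset.disjoint_empty_right _) (fun p => measurable_const)
      (by intro p x y; exact ⟨le_refl 0, zero_le_one⟩)
    simpa [homDensity, ← hE] using h
  have hcard : (0:ℝ) ≤ (E.card : ℝ) := Nat.cast_nonneg _
  have h1 : |homDensity F U - homDensity F W| ≤ sInf ((fun r => (E.card : ℝ) * r) '' A) := by
    apply le_csInf (hAne.image _)
    rintro b ⟨r, hr, rfl⟩
    exact key r hr
  have h2 : sInf ((fun r => (E.card : ℝ) * r) '' A) = (E.card : ℝ) * sInf A := by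
    rw [show ((fun r => (E.card : ℝ) * r) '' A) = (E.card : ℝ) • A from by
      rw [← Set.image_smul]; rfl,
      Real.sInf_smul_of_nonneg hcard, smul_eq_mul]
  have : cutDist U W = sInf A := rfl
  rw [this]
  exact h1.trans_eq h2
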